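/- arXiv:2107.09430 — 2 statements merged into one kernel-verified Lean document; each statement's English description precedes it below -/
import Mathlib

section
/- (Kac's counting lemma.) Let T > 0 and let f : [0,T] → ℝ be continuously differentiable with f(0) ≠ 0, f(T) ≠ 0, and such that there is no t ∈ [0,T] with f(t) = 0 and f′(t) = 0. Then the zero set {t ∈ [0,T] : f(t) = 0} is finite, and its cardinality N₀ satisfies N₀ = lim_{ε → 0⁺} ∫₀^T (1/(2ε)) · 1_{(−ε,ε)}(f(t)) · |f′(t)| dt, where 1_{(−ε,ε)} denotes the indicator function of the interval (−ε,ε). -/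
open MeasureTheory Filter

noncomputable section

/-- Local computation: change of variables on an interval where `f` is injective and whose
image contains `(-ε, ε)`. -/
lemma kac_local (ε a b : ℝ) (hε : 0 < ε) (hab : a ≤ b) (f f' : ℝ → ℝ)
    (hderiv : ∀ t ∈ Set.Icc a b, HasDerivAt f (f' t) t)
    (hinj : Set.InjOn f (Set.Icc a b))
    (hsub : Set.Ioo (-ε) ε ⊆ f '' Set.Icc a b) :
    ∫ t in Set.Icc a b,
        (1 / (2 * ε)) * Set.indicator (Set.Ioo (-ε) ε) (fun _ => (1 : ℝ)) (f t) * |f' t|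
      = 1 := by
  have key := integral_image_eq_integral_abs_deriv_smul (measurableSet_Icc (a := a) (b := b))
      (fun x hx => (hderiv x hx).hasDerivWithinAt) hinj
      (fun y => (1 / (2 * ε)) * Set.indicator (Set.Ioo (-ε) ε) (fun _ => (1 : ℝ)) y)
  have h1 : (∫ t in Set.Icc a b,
      (1 / (2 * ε)) * Set.indicator (Set.Ioo (-ε) ε) (fun _ => (1 : ℝ)) (f t) * |f' t|)
      = ∫ x in Set.Icc a b, |f' x| •
        ((1 / (2 * ε)) * Set.indicator (Set.Ioo (-ε) ε) (fun _ => (1 : ℝ)) (f x)) := by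
    refine setIntegral_congr_fun measurableSet_Icc fun t _ => ?_
    simp only [smul_eq_mul]; ring
  rw [h1, ← key]
  have h2 : (∫ x in f '' Set.Icc a b,
      (1 / (2 * ε)) * Set.indicator (Set.Ioo (-ε) ε) (fun _ => (1 : ℝ)) x)
      = (1 / (2 * ε)) * ∫ x in f '' Set.Icc a b,
          Set.indicator (Set.Ioo (-ε) ε) (fun _ => (1 : ℝ)) x := by
    rw [integral_const_mul]
  rw [h2, setIntegral_indicator measurableSet_Ioo,
    Set.inter_eq_self_of_subset_right hsub]
  simp only [setIntegral_const, smul_eq_mul, mul_one]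
  rw [measureReal_def, Real.volume_Ioo]
  rw [ENNReal.toReal_ofReal (by linarith)]
  field_simp
  ring

/-- The zero set is finite. -/
lemma kac_zeros_finite (T : ℝ) (f f' : ℝ → ℝ)
    (hderiv : ∀ t ∈ Set.Icc 0 T, HasDerivAt f (f' t) t)
    (hnodeg : ∀ t ∈ Set.Icc 0 T, ¬(f t = 0 ∧ f' t = 0)) :
    ({t ∈ Set.Icc 0 T | f t = 0}).Finite := by
  set Z := {t ∈ Set.Icc 0 T | f t = 0} with hZdef
  have hfc : ContinuousOn f (Set.Icc 0 T) :=
    fun t ht => ((hderiv t ht).continuousAt).continuousWithinAt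
  have hZclosed : IsClosed Z := by
    have : Z = Set.Icc 0 T ∩ f ⁻¹' {0} := by
      ext t
      simp only [hZdef, Set.mem_sep_iff, Set.mem_inter_iff, Set.mem_preimage,
        Set.mem_singleton_iff, Set.mem_setOf_eq]
    rw [this]
    exact hfc.preimage_isClosed_of_isClosed isClosed_Icc isClosed_singleton
  have hZcomp : IsCompact Z := isCompact_Icc.of_isClosed_subset hZclosed
    (fun t ht => ht.1)
  by_contra hinf
  replace hinf : Z.Infinite := hinf
  obtain ⟨x, hxZ, hx⟩ := hinf.exists_accPt_of_subset_isCompact hZcomp subset_rfl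
  have hfx : f x = 0 := hxZ.2
  have hfx' : f' x ≠ 0 := fun h => hnodeg x hxZ.1 ⟨hfx, h⟩
  have hslope : Tendsto (slope f x) (nhdsWithin x {x}ᶜ) (nhds (f' x)) :=
    hasDerivAt_iff_tendsto_slope.1 (hderiv x hxZ.1)
  have hev : ∀ᶠ t in nhdsWithin x {x}ᶜ, slope f x t ≠ 0 := hslope.eventually_ne hfx'
  have hev2 : ∀ᶠ t in nhdsWithin x {x}ᶜ, t ∉ Z := by
    filter_upwards [hev] with t ht htZ
    apply ht
    simp [slope, hfx, htZ.2]
  have : (nhdsWithin x {x}ᶜ ⊓ Filter.principal Z).NeBot := hx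
  have hbot : (nhdsWithin x {x}ᶜ ⊓ Filter.principal Z) ≤ ⊥ := by
    rw [le_bot_iff, ← Filter.empty_mem_iff_bot]
    have h1 : {t | t ∉ Z} ∈ nhdsWithin x {x}ᶜ ⊓ Filter.principal Z :=
      Filter.mem_inf_of_left hev2
    have h2 : Z ∈ nhdsWithin x {x}ᶜ ⊓ Filter.principal Z :=
      Filter.mem_inf_of_right (Filter.mem_principal_self Z)
    have := Filter.inter_mem h1 h2
    convert this using 1
    ext t; simp
  exact absurd (le_bot_iff.1 hbot) this.ne

/-- Kac's counting lemma: if `f` is `C¹` on `[0,T]` (with derivative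
`f'`), does not vanish at the endpoints, and has no zero which is also a zero of
`f'`, then its zero set in `[0,T]` is finite and its cardinality is the limit, as
`ε → 0⁺`, of `∫₀^T (1/(2ε)) 1_{(−ε,ε)}(f(t)) |f'(t)| dt`. -/
theorem kac_counting_lemma (T : ℝ) (hT : 0 < T) (f f' : ℝ → ℝ)
    (hderiv : ∀ t ∈ Set.Icc 0 T, HasDerivAt f (f' t) t)
    (hcont : ContinuousOn f' (Set.Icc 0 T))
    (h0 : f 0 ≠ 0) (hTne : f T ≠ 0)
    (hnodeg : ∀ t ∈ Set.Icc 0 T, ¬(f t = 0 ∧ f' t = 0)) :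
    ({t ∈ Set.Icc 0 T | f t = 0}).Finite ∧
      Tendsto (fun ε : ℝ =>
          ∫ t in Set.Icc 0 T,
            (1 / (2 * ε)) * Set.indicator (Set.Ioo (-ε) ε) (fun _ => (1 : ℝ)) (f t)
              * |f' t|)
        (nhdsWithin 0 (Set.Ioi 0))
        (nhds (({t ∈ Set.Icc 0 T | f t = 0}).ncard : ℝ)) := by
  have hZfin : ({t ∈ Set.Icc 0 T | f t = 0}).Finite :=
    kac_zeros_finite T f f' hderiv hnodeg
  refine ⟨hZfin, ?_⟩
  set Z := {t ∈ Set.Icc 0 T | f t = 0} with hZdef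
  have hfc : ContinuousOn f (Set.Icc 0 T) :=
    fun t ht => ((hderiv t ht).continuousAt).continuousWithinAt
  -- every zero lies in the open interval (0, T)
  have hZIoo : ∀ z ∈ Z, z ∈ Set.Ioo (0 : ℝ) T := by
    rintro z ⟨⟨h1, h2⟩, hf0⟩
    refine ⟨h1.lt_of_ne ?_, h2.lt_of_ne ?_⟩
    · rintro rfl; exact h0 hf0
    · rintro rfl; exact hTne hf0
  -- choose radii
  have hchoice : ∀ z : ℝ, ∃ δ : ℝ, 0 < δ ∧ (z ∈ Z →
      Set.Icc (z - δ) (z + δ) ⊆ Set.Icc 0 T ∧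
      ((∀ t ∈ Set.Icc (z - δ) (z + δ), 0 < f' t) ∨
        (∀ t ∈ Set.Icc (z - δ) (z + δ), f' t < 0)) ∧
      (∀ w ∈ Z, w ≠ z → 3 * δ ≤ |z - w|)) := by
    intro z
    by_cases hz : z ∈ Z
    swap
    · exact ⟨1, one_pos, fun h => absurd h hz⟩
    have hzIoo := hZIoo z hz
    have hicc : Set.Icc 0 T ∈ nhds z := Icc_mem_nhds hzIoo.1 hzIoo.2
    have hc' : ContinuousAt f' z := (hcont z hz.1).continuousAt hicc
    have hfz' : f' z ≠ 0 := fun h => hnodeg z hz.1 ⟨hz.2, h⟩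
    have hsign : (∀ᶠ t in nhds z, 0 < f' t) ∨ (∀ᶠ t in nhds z, f' t < 0) := by
      rcases hfz'.lt_or_gt with h | h
      · exact Or.inr (hc' (Iio_mem_nhds h))
      · exact Or.inl (hc' (Ioi_mem_nhds h))
    have hev : ∀ᶠ t in nhds z, t ∈ Set.Icc 0 T ∧
        ((∀ᶠ s in nhds z, 0 < f' s) → 0 < f' t) ∧
        ((¬ ∀ᶠ s in nhds z, 0 < f' s) → f' t < 0) := by
      rcases hsign with h | h
      · filter_upwards [hicc, h] with t h1 h2
        exact ⟨h1, fun _ => h2, fun hn => absurd h hn⟩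
      · by_cases hp : ∀ᶠ s in nhds z, 0 < f' s
        · filter_upwards [hicc, hp] with t h1 h2
          exact ⟨h1, fun _ => h2, fun hn => absurd hp hn⟩
        · filter_upwards [hicc, h] with t h1 h2
          exact ⟨h1, fun hh => absurd hh hp, fun _ => h2⟩
    rw [Metric.eventually_nhds_iff_ball] at hev
    obtain ⟨r₁, hr₁pos, hr₁⟩ := hev
    -- separation from other zeros
    have hS : IsClosed (Z \ {z}) := (hZfin.subset Set.diff_subset).isClosed
    have hznS : z ∈ (Z \ {z})ᶜ := by simp
    obtain ⟨r₂, hr₂pos, hr₂⟩ := Metric.mem_nhds_iff.1 (hS.isOpen_compl.mem_nhds hznS)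
    refine ⟨min (r₁ / 2) (r₂ / 3), by positivity, fun _ => ⟨?_, ?_, ?_⟩⟩
    · intro t ht
      have h1 : |t - z| < r₁ := by
        rw [abs_sub_lt_iff]
        have := ht.1; have := ht.2
        have h3 : min (r₁ / 2) (r₂ / 3) ≤ r₁ / 2 := min_le_left _ _
        constructor <;> linarith
      exact (hr₁ t (by simpa [Real.dist_eq] using h1)).1
    · have hsub : Set.Icc (z - min (r₁ / 2) (r₂ / 3)) (z + min (r₁ / 2) (r₂ / 3)) ⊆
          Metric.ball z r₁ := by
        intro t ht
        have h3 : min (r₁ / 2) (r₂ / 3) ≤ r₁ / 2 := min_le_left _ _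
        have := ht.1; have := ht.2
        rw [Metric.mem_ball, Real.dist_eq, abs_sub_lt_iff]
        constructor <;> linarith
      by_cases hp : ∀ᶠ s in nhds z, 0 < f' s
      · exact Or.inl fun t ht => (hr₁ t (hsub ht)).2.1 hp
      · exact Or.inr fun t ht => (hr₁ t (hsub ht)).2.2 hp
    · intro w hw hwz
      have : w ∉ Metric.ball z r₂ := fun hmem => (hr₂ hmem) ⟨hw, hwz⟩
      rw [Metric.mem_ball, Real.dist_eq, not_lt] at this
      have h3 : min (r₁ / 2) (r₂ / 3) ≤ r₂ / 3 := min_le_right _ _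
      have : r₂ ≤ |z - w| := by rwa [abs_sub_comm] at this
      linarith
  choose δ hδpos hδ using hchoice
  set F : Finset ℝ := hZfin.toFinset with hFdef
  have hmemF : ∀ z, z ∈ F ↔ z ∈ Z := fun z => Set.Finite.mem_toFinset _
  set I : ℝ → Set ℝ := fun z => Set.Icc (z - δ z) (z + δ z) with hIdef
  have hIsub : ∀ z ∈ Z, I z ⊆ Set.Icc 0 T := fun z hz => (hδ z hz).1
  -- monotonicity on each interval
  have hmono : ∀ z ∈ Z, StrictMonoOn f (I z) ∨ StrictAntiOn f (I z) := by
    intro z hz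
    have hsub := hIsub z hz
    have hcf : ContinuousOn f (I z) := hfc.mono hsub
    have hder : ∀ x ∈ interior (I z), deriv f x = f' x := by
      intro x hx
      exact (hderiv x (hsub (interior_subset hx))).deriv
    rcases (hδ z hz).2.1 with h | h
    · left
      refine strictMonoOn_of_deriv_pos (convex_Icc _ _) hcf fun x hx => ?_
      rw [hder x hx]
      exact h x (interior_subset hx)
    · right
      refine strictAntiOn_of_deriv_neg (convex_Icc _ _) hcf fun x hx => ?_
      rw [hder x hx]
      exact h x (interior_subset hx)
  have hmemIz : ∀ z ∈ Z, z - δ z ∈ I z ∧ z ∈ I z ∧ z + δ z ∈ I z := by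
    intro z hz
    have := hδpos z
    refine ⟨?_, ?_, ?_⟩ <;> constructor <;> linarith
  have hinj : ∀ z ∈ Z, Set.InjOn f (I z) := by
    intro z hz
    rcases hmono z hz with h | h
    exacts [h.injOn, h.injOn]
  -- endpoint values are nonzero
  have hεz : ∀ z ∈ Z, 0 < min |f (z - δ z)| |f (z + δ z)| := by
    intro z hz
    obtain ⟨hm1, hm2, hm3⟩ := hmemIz z hz
    have hlt1 : z - δ z < z := by have := hδpos z; linarith
    have hlt2 : z < z + δ z := by have := hδpos z; linarith
    rcases hmono z hz with h | h
    · have h1 := h hm1 hm2 hlt1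
      have h2 := h hm2 hm3 hlt2
      rw [hz.2] at h1 h2
      simp only [lt_min_iff, abs_pos]
      exact ⟨ne_of_lt h1, ne_of_gt h2⟩
    · have h1 := h hm1 hm2 hlt1
      have h2 := h hm2 hm3 hlt2
      rw [hz.2] at h1 h2
      simp only [lt_min_iff, abs_pos]
      exact ⟨ne_of_gt h1, ne_of_lt h2⟩
  -- image contains (-ε, ε) for small ε
  have himage : ∀ z ∈ Z, ∀ ε : ℝ, 0 < ε → ε ≤ min |f (z - δ z)| |f (z + δ z)| →
      Set.Ioo (-ε) ε ⊆ f '' I z := by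
    intro z hz ε hεpos hεle
    obtain ⟨hm1, hm2, hm3⟩ := hmemIz z hz
    have hlt1 : z - δ z < z := by have := hδpos z; linarith
    have hlt2 : z < z + δ z := by have := hδpos z; linarith
    have hle : z - δ z ≤ z + δ z := by linarith
    have hcf : ContinuousOn f (I z) := hfc.mono (hIsub z hz)
    have hε1 : ε ≤ |f (z - δ z)| := le_trans hεle (min_le_left _ _)
    have hε2 : ε ≤ |f (z + δ z)| := le_trans hεle (min_le_right _ _)
    rcases hmono z hz with h | h
    · have h1 := h hm1 hm2 hlt1
      have h2 := h hm2 hm3 hlt2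
      rw [hz.2] at h1 h2
      rw [abs_of_neg h1] at hε1
      rw [abs_of_pos h2] at hε2
      have hIVT := intermediate_value_Icc hle hcf
      intro y hy
      exact hIVT ⟨by cases hy; linarith, by cases hy; linarith⟩
    · have h1 := h hm1 hm2 hlt1
      have h2 := h hm2 hm3 hlt2
      rw [hz.2] at h1 h2
      rw [abs_of_pos h1] at hε1
      rw [abs_of_neg h2] at hε2
      have hIVT := intermediate_value_Icc' hle hcf
      intro y hy
      exact hIVT ⟨by cases hy; linarith, by cases hy; linarith⟩
  -- the complement of the open intervals
  set K : Set ℝ := Set.Icc 0 T \ ⋃ z ∈ F, Set.Ioo (z - δ z) (z + δ z) with hKdef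
  have hKcomp : IsCompact K :=
    isCompact_Icc.diff (isOpen_biUnion fun _ _ => isOpen_Ioo)
  have hKlb : ∃ c : ℝ, 0 < c ∧ ∀ t ∈ K, c ≤ |f t| := by
    rcases K.eq_empty_or_nonempty with hKe | hKne
    · exact ⟨1, one_pos, by simp [hKe]⟩
    · obtain ⟨t₀, ht₀K, ht₀min⟩ := hKcomp.exists_isMinOn hKne
        ((hfc.mono Set.diff_subset).abs)
      refine ⟨|f t₀|, ?_, fun t ht => ht₀min ht⟩
      rw [abs_pos]
      intro hft₀
      have ht₀Z : t₀ ∈ Z := ⟨ht₀K.1, hft₀⟩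
      refine ht₀K.2 (Set.mem_biUnion ((hmemF t₀).2 ht₀Z) ?_)
      have := hδpos t₀
      exact ⟨by linarith, by linarith⟩
  obtain ⟨c, hcpos, hclb⟩ := hKlb
  -- integrability
  obtain ⟨M, hM⟩ := isCompact_Icc.exists_bound_of_continuousOn hcont
  have hInt : ∀ ε : ℝ, 0 < ε → IntegrableOn
      (fun t => (1 / (2 * ε)) * Set.indicator (Set.Ioo (-ε) ε) (fun _ => (1 : ℝ)) (f t)
        * |f' t|) (Set.Icc 0 T) volume := by
    intro ε hεpos
    have hfm : AEMeasurable f (volume.restrict (Set.Icc 0 T)) :=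
      hfc.aemeasurable measurableSet_Icc
    have hindm : AEMeasurable
        (fun t => Set.indicator (Set.Ioo (-ε) ε) (fun _ => (1 : ℝ)) (f t))
        (volume.restrict (Set.Icc 0 T)) :=
      (measurable_const.indicator measurableSet_Ioo).comp_aemeasurable hfm
    have hf'm : AEMeasurable (fun t => |f' t|) (volume.restrict (Set.Icc 0 T)) :=
      (hcont.abs).aemeasurable measurableSet_Icc
    have hmeas : AEStronglyMeasurable
        (fun t => (1 / (2 * ε)) * Set.indicator (Set.Ioo (-ε) ε) (fun _ => (1 : ℝ)) (f t)
          * |f' t|) (volume.restrict (Set.Icc 0 T)) :=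
      ((aemeasurable_const.mul hindm).mul hf'm).aestronglyMeasurable
    refine Integrable.mono' (integrable_const ((1 / (2 * ε)) * (1 + |M|))) hmeas ?_
    rw [ae_restrict_iff' measurableSet_Icc]
    refine Filter.Eventually.of_forall fun t ht => ?_
    have hind : 0 ≤ Set.indicator (Set.Ioo (-ε) ε) (fun _ => (1 : ℝ)) (f t) ∧
        Set.indicator (Set.Ioo (-ε) ε) (fun _ => (1 : ℝ)) (f t) ≤ 1 := by
      unfold Set.indicator
      split <;> norm_num
    have hMt : |f' t| ≤ 1 + |M| := by
      have := hM t ht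
      rw [Real.norm_eq_abs] at this
      have := le_abs_self M
      linarith
    have h2ε : 0 < 1 / (2 * ε) := by positivity
    rw [Real.norm_eq_abs, abs_mul, abs_mul, abs_abs, abs_of_pos h2ε,
      abs_of_nonneg hind.1]
    have habs : 0 ≤ |f' t| := abs_nonneg _
    calc (1 / (2 * ε)) * Set.indicator (Set.Ioo (-ε) ε) (fun _ => (1 : ℝ)) (f t) * |f' t|
        = (1 / (2 * ε)) * (Set.indicator (Set.Ioo (-ε) ε) (fun _ => (1 : ℝ)) (f t) * |f' t|) := by
          ring
      _ ≤ (1 / (2 * ε)) * (1 * (1 + |M|)) := by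
          refine mul_le_mul_of_nonneg_left (mul_le_mul hind.2 hMt habs zero_le_one) h2ε.le
      _ = (1 / (2 * ε)) * (1 + |M|) := by ring
  -- eventual equality of the integral with the number of zeros
  have hev : ∀ᶠ ε in nhdsWithin (0 : ℝ) (Set.Ioi 0),
      (∫ t in Set.Icc 0 T,
        (1 / (2 * ε)) * Set.indicator (Set.Ioo (-ε) ε) (fun _ => (1 : ℝ)) (f t)
          * |f' t|) = (Z.ncard : ℝ) := by
    have hev1 : ∀ᶠ ε in nhdsWithin (0 : ℝ) (Set.Ioi 0), ε ≤ c := by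
      filter_upwards [Ioc_mem_nhdsGT hcpos] with ε hε
      exact hε.2
    have hev2 : ∀ᶠ ε in nhdsWithin (0 : ℝ) (Set.Ioi 0),
        ∀ z ∈ F, ε ≤ min |f (z - δ z)| |f (z + δ z)| := by
      rw [Finset.eventually_all]
      intro z hzF
      filter_upwards [Ioc_mem_nhdsGT (hεz z ((hmemF z).1 hzF))] with ε hε
      exact hε.2
    filter_upwards [hev1, hev2, self_mem_nhdsWithin] with ε hεc hεF hεpos
    rw [Set.mem_Ioi] at hεpos
    set g : ℝ → ℝ := fun t =>
      (1 / (2 * ε)) * Set.indicator (Set.Ioo (-ε) ε) (fun _ => (1 : ℝ)) (f t) * |f' t|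
      with hgdef
    set U : Set ℝ := ⋃ z ∈ F, I z with hUdef
    have hUsub : U ⊆ Set.Icc 0 T := by
      refine Set.iUnion₂_subset fun z hz => hIsub z ((hmemF z).1 hz)
    have hUmeas : MeasurableSet U := F.measurableSet_biUnion fun _ _ => measurableSet_Icc
    -- off U the integrand vanishes
    have hzero : ∀ t ∈ Set.Icc 0 T, t ∉ U → g t = 0 := by
      intro t ht htU
      have htK : t ∈ K := by
        refine ⟨ht, fun hmem => htU ?_⟩
        obtain ⟨z, hzF, hz⟩ := Set.mem_iUnion₂.1 hmem
        exact Set.mem_iUnion₂.2 ⟨z, hzF, ⟨le_of_lt hz.1, le_of_lt hz.2⟩⟩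
      have hft : ε ≤ |f t| := le_trans hεc (hclb t htK)
      have hnotmem : f t ∉ Set.Ioo (-ε) ε := by
        rw [Set.mem_Ioo]
        rcases abs_le.1 (le_refl |f t|) with ⟨h1, h2⟩
        rcases le_abs.1 hft with h | h
        · intro hcon; linarith [hcon.2]
        · intro hcon; linarith [hcon.1]
      rw [hgdef]
      simp [Set.indicator_of_notMem hnotmem]
    have step1 : (∫ t in Set.Icc 0 T, g t) = ∫ t in Set.Icc 0 T, U.indicator g t := by
      refine setIntegral_congr_fun measurableSet_Icc fun t ht => ?_
      by_cases htU : t ∈ U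
      · rw [Set.indicator_of_mem htU]
      · rw [Set.indicator_of_notMem htU, hzero t ht htU]
    have step2 : (∫ t in Set.Icc 0 T, U.indicator g t) = ∫ t in U, g t := by
      rw [setIntegral_indicator hUmeas, Set.inter_eq_self_of_subset_right hUsub]
    have hdisj : (↑F : Set ℝ).Pairwise (Function.onFun Disjoint I) := by
      intro z hzF w hwF hzw
      rw [Function.onFun]
      rw [Set.disjoint_left]
      intro t htz htw
      have hzZ := (hmemF z).1 hzF
      have hwZ := (hmemF w).1 hwF
      have h1 : 3 * δ z ≤ |z - w| := (hδ z hzZ).2.2 w hwZ (Ne.symm hzw)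
      have h2 : 3 * δ w ≤ |w - z| := (hδ w hwZ).2.2 z hzZ hzw
      rw [abs_sub_comm] at h2
      have h3 : |z - w| ≤ |z - t| + |t - w| := abs_sub_le z t w
      have h4 : |z - t| ≤ δ z := by
        rw [abs_sub_comm, abs_le]
        exact ⟨by linarith [htz.1], by linarith [htz.2]⟩
      have h5 : |t - w| ≤ δ w := by
        rw [abs_le]
        exact ⟨by linarith [htw.1], by linarith [htw.2]⟩
      have h6 : 0 < |z - w| := by
        rw [abs_pos, sub_ne_zero]
        exact hzw
      linarith
    have step3 : (∫ t in U, g t) = ∑ z ∈ F, ∫ t in I z, g t := by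
      refine integral_biUnion_finset F (fun _ _ => measurableSet_Icc) hdisj fun z hzF => ?_
      exact (hInt ε hεpos).mono_set (hIsub z ((hmemF z).1 hzF))
    have step4 : ∀ z ∈ F, (∫ t in I z, g t) = 1 := by
      intro z hzF
      have hzZ := (hmemF z).1 hzF
      have hle : z - δ z ≤ z + δ z := by have := hδpos z; linarith
      exact kac_local ε (z - δ z) (z + δ z) hεpos hle f f'
        (fun t ht => hderiv t (hIsub z hzZ ht)) (hinj z hzZ)
        (himage z hzZ ε hεpos (hεF z hzF))
    rw [step1, step2, step3, Finset.sum_congr rfl step4, Finset.sum_const, nsmul_eq_mul,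
      mul_one, Set.ncard_eq_toFinset_card Z hZfin]
  exact Tendsto.congr' (hev.mono fun ε h => h.symm) tendsto_const_nhds

end
end

section
/- (Covariance of Hermite polynomials of jointly Gaussian variables.) Let p, q ≥ 0 be integers and ρ ∈ [−1, 1]. Then ∫_ℝ ∫_ℝ H_p(x) · H_q(ρx + √(1−ρ²) y) · φ(x) φ(y) dx dy = δ_{pq} · p! · ρ^p, where δ_{pq} is the Kronecker delta. Equivalently, if Z₁, Z₂ are jointly Gaussian standard random variables with correlation ρ (realized as Z₂ = ρZ₁ + √(1−ρ²)Z with Z independent of Z₁), then E[H_p(Z₁) H_q(Z₂)] = δ_{pq} p! ρ^p. -/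
open MeasureTheory Real Filter
open Polynomial Topology
open scoped ENNReal NNReal

noncomputable section

/-- The standard Gaussian density `φ(t) = (2π)^{-1/2} e^{-t²/2}`. -/
def gaussDensity (t : ℝ) : ℝ := (Real.sqrt (2 * π))⁻¹ * Real.exp (-t ^ 2 / 2)

/-- The standard Gaussian distribution function `Φ(u) = ∫_{-∞}^u φ(t) dt`. -/
def gaussCDF (u : ℝ) : ℝ := ∫ t in Set.Iic u, gaussDensity t

/-- The k-th probabilists' Hermite polynomial,
`H_k(u) = (−1)^k e^{u²/2} (d/du)^k e^{−u²/2}`. -/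
def hermiteH (k : ℕ) (u : ℝ) : ℝ :=
  (-1) ^ k * Real.exp (u ^ 2 / 2) * iteratedDeriv k (fun t => Real.exp (-t ^ 2 / 2)) u

/-- real Hermite polynomial -/
def Hr (n : ℕ) : Polynomial ℝ := (Polynomial.hermite n).map (Int.castRingHom ℝ)

lemma Hr_zero : Hr 0 = 1 := by simp [Hr, Polynomial.hermite_zero]

lemma Hr_one : Hr 1 = X := by simp [Hr, Polynomial.hermite_one]

lemma Hr_succ (n : ℕ) : Hr (n + 1) = X * Hr n - derivative (Hr n) := by
  simp [Hr, Polynomial.hermite_succ, Polynomial.derivative_map]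

lemma derivative_Hr (n : ℕ) : derivative (Hr (n + 1)) = C ((n : ℝ) + 1) * Hr n := by
  induction n with
  | zero => simp [Hr_one, Hr_zero]
  | succ m ih =>
    rw [Hr_succ (m + 1), derivative_sub, derivative_mul, derivative_X, ih,
      derivative_mul, derivative_C, Hr_succ m]
    have hC : (C ((↑(m+1):ℝ) + 1) : ℝ[X]) = C ((m:ℝ)+1) + 1 := by
      push_cast; rw [map_add, C_1]
    rw [hC]
    ring

lemma hermiteH_eq_eval (k : ℕ) (u : ℝ) : hermiteH k u = (Hr k).eval u := by
  have h1 : (fun t : ℝ => Real.exp (-t ^ 2 / 2)) = fun t => Real.exp (-(t ^ 2 / 2)) := by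
    funext t; rw [neg_div]
  have h2 : (Hr k).eval u = aeval u (Polynomial.hermite k) := by
    rw [Hr, aeval_def, ← eval_map]
    norm_num [algebraMap_int_eq]
  rw [hermiteH, iteratedDeriv_eq_iterate, h1,
    Polynomial.deriv_gaussian_eq_hermite_mul_gaussian, h2]
  rw [show u ^ 2 / 2 = -(-(u ^ 2 / 2)) by ring]
  have := Real.exp_ne_zero (-(u ^ 2 / 2))
  rw [Real.exp_neg]
  field_simp
  ring_nf
  rw [show ((-1:ℝ) ^ (k * 2)) = 1 by
    rw [mul_comm, pow_mul, neg_one_sq, one_pow], mul_one]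
lemma gaussDensity_eq (t : ℝ) :
    gaussDensity t = (Real.sqrt (2 * π))⁻¹ * Real.exp (-(1/2) * t ^ 2) := by
  rw [gaussDensity]; ring_nf

lemma continuous_gaussDensity : Continuous gaussDensity := by
  unfold gaussDensity; fun_prop

lemma gaussDensity_pos (t : ℝ) : 0 < gaussDensity t := by
  rw [gaussDensity]; positivity

lemma integral_gaussDensity : ∫ t : ℝ, gaussDensity t = 1 := by
  have h : ∫ t : ℝ, Real.exp (-(1/2) * t ^ 2) = Real.sqrt (π / (1/2)) :=
    integral_gaussian (1/2)
  have h2 : (fun t : ℝ => gaussDensity t)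
      = fun t => (Real.sqrt (2*π))⁻¹ * Real.exp (-(1/2) * t^2) := funext gaussDensity_eq
  rw [h2, integral_const_mul, h, show π / (1/2) = 2 * π by ring]
  exact inv_mul_cancel₀ (Real.sqrt_pos.mpr (by positivity)).ne'

lemma hasDerivAt_gaussDensity (t : ℝ) :
    HasDerivAt gaussDensity (-t * gaussDensity t) t := by
  have h1 : HasDerivAt (fun t : ℝ => -t ^ 2 / 2) (-t) t := by
    have := ((hasDerivAt_pow 2 t).neg.div_const 2)
    refine this.congr_deriv ?_
    push_cast; ring
  have h2 := (h1.exp).const_mul (Real.sqrt (2 * π))⁻¹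
  have h3 : (fun t : ℝ => (Real.sqrt (2 * π))⁻¹ * Real.exp (-t ^ 2 / 2)) = gaussDensity := rfl
  rw [h3] at h2
  refine h2.congr_deriv ?_
  rw [gaussDensity]; ring

lemma tendsto_poly_gauss_atTop (P : Polynomial ℝ) :
    Tendsto (fun y : ℝ => P.eval y * gaussDensity y) atTop (𝓝 0) := by
  have hg : Tendsto (fun y : ℝ => (Real.sqrt (2*π))⁻¹ * |P.eval y / Real.exp y|)
      atTop (𝓝 0) := by
    simpa using (P.tendsto_div_exp_atTop.abs.const_mul ((Real.sqrt (2*π))⁻¹))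
  apply squeeze_zero_norm' _ hg
  filter_upwards [eventually_ge_atTop (2:ℝ)] with y hy
  have h1 : Real.exp (-y^2/2) ≤ Real.exp (-y) := Real.exp_le_exp.mpr (by nlinarith)
  have habs : |P.eval y / Real.exp y| = |P.eval y| * Real.exp (-y) := by
    rw [abs_div, abs_of_pos (Real.exp_pos y), div_eq_mul_inv, ← Real.exp_neg]
  rw [habs, norm_mul, Real.norm_eq_abs, Real.norm_eq_abs, abs_of_pos (gaussDensity_pos y),
    gaussDensity]
  calc |P.eval y| * ((Real.sqrt (2*π))⁻¹ * Real.exp (-y^2/2))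
      ≤ |P.eval y| * ((Real.sqrt (2*π))⁻¹ * Real.exp (-y)) := by
        gcongr
    _ = (Real.sqrt (2*π))⁻¹ * (|P.eval y| * Real.exp (-y)) := by ring

lemma tendsto_poly_gauss_atBot (P : Polynomial ℝ) :
    Tendsto (fun y : ℝ => P.eval y * gaussDensity y) atBot (𝓝 0) := by
  have h := (tendsto_poly_gauss_atTop (P.comp (-X))).comp tendsto_neg_atBot_atTop
  refine h.congr fun y => ?_
  simp [Function.comp, eval_comp, gaussDensity, neg_sq]


lemma poly_gauss_bounded (P : Polynomial ℝ) :
    ∃ M : ℝ, ∀ y : ℝ, |P.eval y * gaussDensity y| ≤ M := by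
  have htop := (tendsto_poly_gauss_atTop P).abs.eventually (gt_mem_nhds (by norm_num : |(0:ℝ)| < 1))
  have hbot := (tendsto_poly_gauss_atBot P).abs.eventually (gt_mem_nhds (by norm_num : |(0:ℝ)| < 1))
  obtain ⟨A, hA⟩ := eventually_atTop.mp htop
  obtain ⟨B, hB⟩ := eventually_atBot.mp hbot
  obtain ⟨C, hC⟩ := (isCompact_Icc (a := B) (b := A)).exists_bound_of_continuousOn
    ((P.continuous.mul continuous_gaussDensity).continuousOn)
  refine ⟨max C 1, fun y => ?_⟩
  rcases le_or_gt y A with h1 | h1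
  · rcases le_or_gt B y with h2 | h2
    · exact le_trans (by simpa [Real.norm_eq_abs, abs_mul] using hC y ⟨h2, h1⟩) (le_max_left _ _)
    · exact le_trans (hB y h2.le).le (le_max_right _ _)
  · exact le_trans (hA y h1.le).le (le_max_right _ _)

lemma integrable_poly_gauss (P : Polynomial ℝ) :
    Integrable fun y : ℝ => P.eval y * gaussDensity y := by
  obtain ⟨M, hM⟩ := poly_gauss_bounded (P.comp (C (Real.sqrt 2) * X))
  refine ((integrable_exp_neg_mul_sq (b := 1/4) (by norm_num)).const_mul M).mono'
    ((P.continuous.mul continuous_gaussDensity).aestronglyMeasurable) ?_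
  filter_upwards with y
  have hs2 : Real.sqrt 2 ≠ 0 := by positivity
  have h2 : Real.sqrt 2 * (y / Real.sqrt 2) = y := by field_simp
  have key := hM (y / Real.sqrt 2)
  rw [eval_comp, eval_mul, eval_C, eval_X, h2] at key
  have hgauss : gaussDensity y = gaussDensity (y / Real.sqrt 2) * Real.exp (-(1/4) * y^2) := by
    rw [gaussDensity, gaussDensity, mul_assoc, ← Real.exp_add]
    congr 2
    rw [div_pow, Real.sq_sqrt (by norm_num : (0:ℝ) ≤ 2)]
    ring
  rw [Real.norm_eq_abs, hgauss, ← mul_assoc, abs_mul, abs_of_pos (Real.exp_pos _)]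
  exact mul_le_mul_of_nonneg_right key (Real.exp_pos _).le

lemma integral_poly_mul_id_gauss (P : Polynomial ℝ) :
    ∫ y : ℝ, P.eval y * (y * gaussDensity y)
      = ∫ y : ℝ, (derivative P).eval y * gaussDensity y := by
  set Q := derivative P - X * P with hQ
  have hderiv : ∀ y : ℝ, HasDerivAt (fun y => P.eval y * gaussDensity y)
      (Q.eval y * gaussDensity y) y := by
    intro y
    have h := (P.hasDerivAt y).mul (hasDerivAt_gaussDensity y)
    refine h.congr_deriv ?_
    simp only [hQ, eval_sub, eval_mul, eval_X]
    ring
  have h0 : ∫ y : ℝ, Q.eval y * gaussDensity y = 0 := by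
    rw [integral_of_hasDerivAt_of_tendsto hderiv (integrable_poly_gauss Q)
      (tendsto_poly_gauss_atBot P) (tendsto_poly_gauss_atTop P)]
    simp
  have hsplit : (fun y : ℝ => Q.eval y * gaussDensity y)
      = fun y => (derivative P).eval y * gaussDensity y - P.eval y * (y * gaussDensity y) := by
    funext y
    simp only [hQ, eval_sub, eval_mul, eval_X]
    ring
  rw [hsplit] at h0
  have hint2 : Integrable fun y : ℝ => P.eval y * (y * gaussDensity y) := by
    refine (integrable_poly_gauss (X * P)).congr ?_
    filter_upwards with y
    simp only [eval_mul, eval_X]; ring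
  rw [integral_sub (integrable_poly_gauss _) hint2] at h0
  linarith [h0]

lemma integrable_poly_mul_id_gauss (P : Polynomial ℝ) :
    Integrable fun y : ℝ => P.eval y * (y * gaussDensity y) := by
  refine (integrable_poly_gauss (X * P)).congr ?_
  filter_upwards with y
  simp only [eval_mul, eval_X]; ring

lemma integral_Hr_gauss (q : ℕ) :
    ∫ x : ℝ, (Hr q).eval x * gaussDensity x = if q = 0 then 1 else 0 := by
  cases q with
  | zero => simp [Hr_zero, integral_gaussDensity]
  | succ r =>
    have h1 : (fun x : ℝ => (Hr (r+1)).eval x * gaussDensity x)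
        = fun x => (Hr r).eval x * (x * gaussDensity x)
            - (derivative (Hr r)).eval x * gaussDensity x := by
      funext x
      rw [Hr_succ, eval_sub, eval_mul, eval_X]
      ring
    rw [h1, integral_sub (integrable_poly_mul_id_gauss _) (integrable_poly_gauss _),
      integral_poly_mul_id_gauss, sub_self]
    simp

lemma orth_Hr (p : ℕ) : ∀ q : ℕ, ∫ x : ℝ, (Hr p * Hr q).eval x * gaussDensity x
    = if p = q then (p.factorial : ℝ) else 0 := by
  induction p with
  | zero =>
    intro q
    simp only [Hr_zero, one_mul]
    rw [integral_Hr_gauss]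
    simp [eq_comm]
  | succ p ih =>
    intro q
    have hsplit : (fun x : ℝ => (Hr (p+1) * Hr q).eval x * gaussDensity x)
        = fun x => (Hr p * Hr q).eval x * (x * gaussDensity x)
            - (derivative (Hr p) * Hr q).eval x * gaussDensity x := by
      funext x
      rw [Hr_succ]
      simp only [eval_mul, eval_sub, eval_X]
      ring
    rw [hsplit, integral_sub (integrable_poly_mul_id_gauss _) (integrable_poly_gauss _),
      integral_poly_mul_id_gauss, derivative_mul]
    rw [show (fun x : ℝ => (derivative (Hr p) * Hr q + Hr p * derivative (Hr q)).eval x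
          * gaussDensity x)
        = fun x => (derivative (Hr p) * Hr q).eval x * gaussDensity x
            + (Hr p * derivative (Hr q)).eval x * gaussDensity x from by
      funext x; simp only [eval_add]; ring]
    rw [integral_add (integrable_poly_gauss _) (integrable_poly_gauss _), add_sub_cancel_left]
    cases q with
    | zero => simp [Hr_zero]
    | succ r =>
      rw [derivative_Hr]
      rw [show (fun x : ℝ => (Hr p * (C ((r:ℝ)+1) * Hr r)).eval x * gaussDensity x)
          = fun x => ((r:ℝ)+1) * ((Hr p * Hr r).eval x * gaussDensity x) from by
        funext x; simp only [eval_mul, eval_C]; ring]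
      rw [integral_const_mul, ih r]
      by_cases hpr : p = r
      · subst hpr
        rw [if_pos rfl, if_pos rfl, Nat.factorial_succ]
        push_cast; ring
      · rw [if_neg hpr, if_neg (by omega : ¬ p + 1 = r + 1), mul_zero]

lemma inner_integral (ρ s : ℝ) (hs : s ^ 2 = 1 - ρ ^ 2) :
    ∀ q : ℕ, ∀ x : ℝ, ∫ y : ℝ, (Hr q).eval (ρ * x + s * y) * gaussDensity y
      = ρ ^ q * (Hr q).eval x := by
  intro q
  induction q using Nat.strong_induction_on with
  | _ q ih =>
    intro x
    set L : Polynomial ℝ := C (ρ * x) + C s * X with hLdef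
    have hL : ∀ (R : Polynomial ℝ) (y : ℝ), (R.comp L).eval y = R.eval (ρ * x + s * y) := by
      intro R y
      rw [eval_comp]
      simp [hLdef]
    match q with
    | 0 => simp [Hr_zero, integral_gaussDensity]
    | (n + 1) =>
      have hdecomp : (fun y : ℝ => (Hr (n+1)).eval (ρ * x + s * y) * gaussDensity y)
          = fun y => (ρ * x) * (((Hr n).comp L).eval y * gaussDensity y)
              + s * (((Hr n).comp L).eval y * (y * gaussDensity y))
              - ((derivative (Hr n)).comp L).eval y * gaussDensity y := by
        funext y
        simp only [hL]
        rw [Hr_succ, eval_sub, eval_mul, eval_X]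
        ring
      have hintA : Integrable fun y : ℝ =>
          ρ * x * (((Hr n).comp L).eval y * gaussDensity y) :=
        (integrable_poly_gauss _).const_mul _
      have hintB : Integrable fun y : ℝ =>
          s * (((Hr n).comp L).eval y * (y * gaussDensity y)) :=
        (integrable_poly_mul_id_gauss _).const_mul _
      have hintAB : Integrable fun y : ℝ =>
          ρ * x * (((Hr n).comp L).eval y * gaussDensity y)
            + s * (((Hr n).comp L).eval y * (y * gaussDensity y)) := hintA.add hintB
      rw [hdecomp, integral_sub hintAB (integrable_poly_gauss _),
        integral_add hintA hintB,
        integral_const_mul, integral_const_mul, integral_poly_mul_id_gauss]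
      have hDL : derivative ((Hr n).comp L) = C s * ((derivative (Hr n)).comp L) := by
        rw [derivative_comp]
        simp [hLdef]
      rw [show (fun y : ℝ => (derivative ((Hr n).comp L)).eval y * gaussDensity y)
          = fun y => s * (((derivative (Hr n)).comp L).eval y * gaussDensity y) from by
        funext y; rw [hDL]; simp only [eval_mul, eval_C]; ring]
      rw [integral_const_mul]
      have hF : (∫ y : ℝ, ((Hr n).comp L).eval y * gaussDensity y)
          = ρ ^ n * (Hr n).eval x := by
        simp only [hL]
        exact ih n (Nat.lt_succ_self n) x
      rw [hF]
      set J := ∫ y : ℝ, ((derivative (Hr n)).comp L).eval y * gaussDensity y with hJdef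
      have hcomb : ρ * x * (ρ ^ n * (Hr n).eval x) + s * (s * J) - J
          = ρ * x * (ρ ^ n * (Hr n).eval x) - ρ ^ 2 * J := by
        rw [show s * (s * J) = s ^ 2 * J from by ring, hs]
        ring
      rw [hcomb]
      match n with
      | 0 =>
        have hJ0 : J = 0 := by
          rw [hJdef, Hr_zero]
          simp
        rw [hJ0, Hr_zero, Hr_one]
        simp
      | (m + 1) =>
        have hJ : J = ((m:ℝ) + 1) * (ρ ^ m * (Hr m).eval x) := by
          rw [hJdef, derivative_Hr]
          rw [show (fun y : ℝ => (((C ((m:ℝ)+1) * Hr m)).comp L).eval y * gaussDensity y)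
              = fun y => ((m:ℝ)+1) * (((Hr m).comp L).eval y * gaussDensity y) from by
            funext y; rw [mul_comp, C_comp]; simp only [eval_mul, eval_C]; ring]
          rw [integral_const_mul]
          congr 1
          simp only [hL]
          exact ih m (by omega) x
        rw [hJ, Hr_succ (m+1), eval_sub, eval_mul, eval_X, derivative_Hr, eval_mul, eval_C]
        ring

/-- covariance of Hermite polynomials of jointly standard Gaussian
variables with correlation `ρ`:
`E[H_p(Z₁) H_q(ρZ₁ + √(1−ρ²)Z)] = δ_{pq} p! ρ^p`. -/
theorem hermite_covariance_formula (p q : ℕ) (ρ : ℝ) (hρ : ρ ∈ Set.Icc (-1 : ℝ) 1) :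
    ∫ x : ℝ, ∫ y : ℝ,
        hermiteH p x * hermiteH q (ρ * x + Real.sqrt (1 - ρ ^ 2) * y) *
          gaussDensity x * gaussDensity y
      = if p = q then (Nat.factorial p : ℝ) * ρ ^ p else 0 := by
  have h1 : (0:ℝ) ≤ 1 - ρ ^ 2 := by nlinarith [hρ.1, hρ.2]
  have hs2 : (Real.sqrt (1 - ρ ^ 2)) ^ 2 = 1 - ρ ^ 2 := Real.sq_sqrt h1
  have hinner := inner_integral ρ (Real.sqrt (1 - ρ ^ 2)) hs2 q
  have hout : (∫ x : ℝ, ∫ y : ℝ,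
        hermiteH p x * hermiteH q (ρ * x + Real.sqrt (1 - ρ ^ 2) * y) *
          gaussDensity x * gaussDensity y)
      = ∫ x : ℝ, ρ ^ q * ((Hr p * Hr q).eval x * gaussDensity x) := by
    congr 1
    funext x
    rw [show (fun y : ℝ => hermiteH p x * hermiteH q (ρ * x + Real.sqrt (1 - ρ ^ 2) * y) *
          gaussDensity x * gaussDensity y)
        = fun y => ((Hr p).eval x * gaussDensity x) *
            ((Hr q).eval (ρ * x + Real.sqrt (1 - ρ ^ 2) * y) * gaussDensity y) from by
      funext y
      rw [hermiteH_eq_eval, hermiteH_eq_eval]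
      ring]
    rw [integral_const_mul, hinner x, eval_mul]
    ring
  rw [hout, integral_const_mul, orth_Hr]
  by_cases hpq : p = q
  · subst hpq
    rw [if_pos rfl, if_pos rfl]
    ring
  · rw [if_neg hpq, if_neg hpq, mul_zero]
end
end
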